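/- arXiv:0811.2325 — 2 statements merged into one kernel-verified Lean document; each statement's English description precedes it below -/
import Mathlib

section
/- The quadratic map τ : P²(C) ⇢ P²(C), (x₀:x₁:x₂) ↦ (x₀² : x₀x₁ : x₁² − x₀x₂), is a birational involution (τ∘τ = id as rational maps), its unique indeterminacy point is (0:0:1), and its unique contracted line is x₀ = 0. -/
open MvPolynomial

/-- Homogeneous-coordinate polynomials: polynomials in three variables over `ℂ`. -/
abbrev P3 : Type := MvPolynomial (Fin 3) ℂ

/-- Vectors in `ℂ³` (homogeneous coordinates on `ℙ²(ℂ)`). -/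
abbrev V3 : Type := Fin 3 → ℂ

/-- Evaluation of a polynomial triple at a point of `ℂ³`. -/
noncomputable def evalT (F : Fin 3 → P3) (x : V3) : V3 := fun i => eval x (F i)

/-- Two vectors of `ℂ³` represent the same point of `ℙ²(ℂ)`. -/
def ProjRel (u v : V3) : Prop := ∃ c : ℂ, c ≠ 0 ∧ v = c • u

/-- The three components have no nonconstant common factor. -/
def NoCommonFactor (F : Fin 3 → P3) : Prop := ∀ p : P3, (∀ i, p ∣ F i) → IsUnit p

/-- The Jacobian determinant `det (∂Fᵢ/∂xⱼ)` of a polynomial triple. -/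
noncomputable def detJac (F : Fin 3 → P3) : P3 :=
  Matrix.det (Matrix.of fun i j => pderiv j (F i))

/-- `G` is a rational inverse of `F`: both composites are (a nonzero multiple of) the
identity as rational maps of `ℙ²(ℂ)`. -/
def InverseOf (G F : Fin 3 → P3) : Prop :=
  (∃ h : P3, h ≠ 0 ∧ ∀ i, bind₁ F (G i) = h * X i) ∧
  (∃ h : P3, h ≠ 0 ∧ ∀ i, bind₁ G (F i) = h * X i)

/-- The rational map of `ℙ²(ℂ)` induced by `F` is birational: it admits a rational
inverse (given by a triple of homogeneous polynomials of some common degree). -/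
def IsBirational (F : Fin 3 → P3) : Prop :=
  ∃ (m : ℕ) (G : Fin 3 → P3), (∀ i, (G i).IsHomogeneous m) ∧ InverseOf G F

/-- `F` contracts the curve `{P = 0}`: the image under `F` of the curve, away from the
indeterminacy points of `F`, is a single point of `ℙ²(ℂ)`. -/
def Contracts (F : Fin 3 → P3) (P : P3) : Prop :=
  ∃ p : V3, p ≠ 0 ∧ ∀ x : V3, x ≠ 0 → eval x P = 0 → evalT F x ≠ 0 →
    ProjRel p (evalT F x)

/-- The quadratic map `τ : (x₀:x₁:x₂) ↦ (x₀² : x₀x₁ : x₁² − x₀x₂)`. -/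
noncomputable def tauC : Fin 3 → P3 := ![X 0 ^ 2, X 0 * X 1, X 1 ^ 2 - X 0 * X 2]


section TauAux

private lemma tau0' (x : V3) : evalT tauC x 0 = x 0 ^ 2 := by simp [evalT, tauC]

private lemma tautau (x : V3) : evalT tauC (evalT tauC x) = (x 0)^3 • x := by
  funext i; fin_cases i <;> simp [evalT, tauC] <;> ring

private lemma tauscal (c : ℂ) (x : V3) : evalT tauC (c • x) = c^2 • evalT tauC x := by
  funext i; fin_cases i <;> simp [evalT, tauC] <;> ring

private lemma assoc_of_dvd_hom {P L : P3} {d : ℕ} (hP : P.IsHomogeneous d) (hd : 1 ≤ d)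
    (hL : L.IsHomogeneous 1) (hL0 : L ≠ 0) (hdvd : P ∣ L) :
    ∃ c : ℂ, c ≠ 0 ∧ L = C c * P := by
  obtain ⟨u, rfl⟩ := hdvd
  have hPne : P ≠ 0 := by rintro rfl; simp at hL0
  have h1 : homogeneousComponent 1 (P * u) = P * u := by
    rw [homogeneousComponent_of_mem ((mem_homogeneousSubmodule _ _).2 hL), if_pos rfl]
  have hsum : P * u = ∑ e ∈ Finset.range (u.totalDegree + 1), P * homogeneousComponent e u := by
    rw [← Finset.mul_sum, sum_homogeneousComponent]
  have h2 : P * u = ∑ e ∈ Finset.range (u.totalDegree + 1),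
      if 1 = d + e then P * homogeneousComponent e u else 0 := by
    conv_lhs => rw [← h1, hsum]
    rw [map_sum]
    refine Finset.sum_congr rfl fun e _ => ?_
    exact homogeneousComponent_of_mem ((mem_homogeneousSubmodule _ _).2
      (hP.mul (homogeneousComponent_isHomogeneous e u)))
  rcases eq_or_lt_of_le hd with hd1 | hd2
  · subst hd1
    have h3 : P * u = P * homogeneousComponent 0 u := by
      rw [h2, Finset.sum_eq_single 0]
      · simp
      · intro b _ hb; rw [if_neg]; omega
      · intro h; simp at h
    refine ⟨coeff 0 u, ?_, ?_⟩
    · intro hc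
      apply hL0
      rw [h3, homogeneousComponent_zero, hc]; simp
    · rw [h3, homogeneousComponent_zero, mul_comm]
  · exfalso; apply hL0
    rw [h2, Finset.sum_eq_zero]
    intro e _; rw [if_neg]; omega

private lemma tau_contracted_line (P : P3) (hirr : Irreducible P)
    (hdeg : ∃ d : ℕ, 1 ≤ d ∧ P.IsHomogeneous d)
    (hcon : Contracts tauC P) : Associated P (X 0) := by
  obtain ⟨d, hd1, hdhom⟩ := hdeg
  obtain ⟨p, hp0, hcp⟩ := hcon
  set q := evalT tauC p with hqdef
  have hPne : P ≠ 0 := hirr.ne_zero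
  have key : ∀ x : V3, eval x P = 0 → x 0 = 0 ∨ (p 0 ≠ 0 ∧ ∃ t : ℂ, x = t • q) := by
    intro x hx
    by_cases hx0 : x 0 = 0
    · exact Or.inl hx0
    right
    have hxne : x ≠ 0 := fun h => hx0 (by rw [h]; rfl)
    have htne : evalT tauC x ≠ 0 := by
      intro h
      have h0 := congrFun h 0
      rw [tau0'] at h0
      exact hx0 (pow_eq_zero_iff (n := 2) (by norm_num) |>.1 h0)
    obtain ⟨c, hc, hcx⟩ := hcp x hxne hx htne
    have hp00 : p 0 ≠ 0 := by
      intro h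
      have h0 := congrFun hcx 0
      rw [tau0'] at h0
      simp [h] at h0
      exact hx0 h0
    refine ⟨hp00, c ^ 2 / (x 0) ^ 3, ?_⟩
    have h1 : (x 0) ^ 3 • x = c ^ 2 • q := by
      rw [← tautau x, hcx, tauscal]
    funext i
    have h2 := congrFun h1 i
    simp only [Pi.smul_apply, smul_eq_mul] at h2 ⊢
    field_simp
    linear_combination h2
  have hPprime : Prime P := hirr.prime
  have hIprime : (Ideal.span {P}).IsPrime := (Ideal.span_singleton_prime hPne).2 hPprime
  have hmem_of_vanish : ∀ F : P3, (∀ x : V3, eval x P = 0 → eval x F = 0) → P ∣ F := by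
    intro F hF
    rw [← Ideal.mem_span_singleton, ← hIprime.radical,
      ← vanishingIdeal_zeroLocus_eq_radical (K := ℂ)]
    intro x hxmem
    exact hF x (hxmem P (Ideal.mem_span_singleton.2 dvd_rfl))
  have hXhom : (X 0 : P3).IsHomogeneous 1 := isHomogeneous_X _ _
  have hXne : (X 0 : P3) ≠ 0 := X_ne_zero _
  have hfinish : P ∣ X 0 → Associated P (X 0) := by
    intro hdvd
    obtain ⟨c, hc, hX⟩ := assoc_of_dvd_hom hdhom hd1 hXhom hXne hdvd
    have hu : IsUnit (C c : P3) := (IsUnit.map (C : ℂ →+* P3) (isUnit_iff_ne_zero.2 hc))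
    exact ⟨hu.unit, by rw [IsUnit.unit_spec, mul_comm, ← hX]⟩
  by_cases hall : ∀ x : V3, eval x P = 0 → x 0 = 0
  · exact hfinish (hmem_of_vanish _ fun x hx => by rw [eval_X]; exact hall x hx)
  push_neg at hall
  obtain ⟨x₀, hx₀P, hx₀0⟩ := hall
  have hp00 : p 0 ≠ 0 := ((key x₀ hx₀P).resolve_left hx₀0).1
  have hq0 : q 0 ≠ 0 := by rw [hqdef, tau0']; exact pow_ne_zero _ hp00
  set L : P3 := C (q 0) * X 1 - C (q 1) * X 0 with hLdef
  have hLhom : L.IsHomogeneous 1 := by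
    apply IsHomogeneous.sub <;> exact (isHomogeneous_X _ _).C_mul _
  have hLne : L ≠ 0 := by
    intro h
    have := congrArg (eval (![0,1,0] : V3)) h
    simp [hLdef] at this
    exact hq0 this
  have hdvdXL : P ∣ X 0 * L := by
    apply hmem_of_vanish
    intro x hx
    rcases key x hx with h0 | ⟨-, t, rfl⟩
    · simp [hLdef, h0]
    · simp only [hLdef, eval_mul, eval_sub, eval_C, eval_X, Pi.smul_apply, smul_eq_mul]
      ring
  rcases hPprime.dvd_or_dvd hdvdXL with hdvd | hdvd
  · exact hfinish hdvd
  · exfalso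
    obtain ⟨c, hc, hL⟩ := assoc_of_dvd_hom hdhom hd1 hLhom hLne hdvd
    set y : V3 := ![q 0, q 1, q 2 + 1] with hydef
    have hyL : eval y L = 0 := by simp [hLdef, hydef]; ring
    have hyP : eval y P = 0 := by
      have := congrArg (eval y) hL
      rw [hyL, eval_mul, eval_C] at this
      exact (mul_eq_zero.1 this.symm).resolve_left hc
    rcases key y hyP with h0 | ⟨-, t, hy⟩
    · exact hq0 (by simpa [hydef] using h0)
    · have h0 := congrFun hy 0
      have h2 := congrFun hy 2
      simp only [hydef, Pi.smul_apply, smul_eq_mul, Matrix.cons_val_zero,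
        Matrix.cons_val_two, Matrix.tail_cons, Matrix.head_cons] at h0 h2
      have ht : t = 1 := by
        have h' : (t - 1) * q 0 = 0 := by linear_combination -h0
        rcases mul_eq_zero.1 h' with h'' | h''
        · exact sub_eq_zero.1 h''
        · exact absurd h'' hq0
      rw [ht, one_mul] at h2
      exact one_ne_zero (by linear_combination h2)

end TauAux

/-- `τ` is a birational involution (`τ ∘ τ = id` as rational maps),
its unique indeterminacy point is `(0:0:1)`, and its unique contracted curve is the
line `x₀ = 0`. -/

theorem tau_involution_props :
    (∃ h : P3, h ≠ 0 ∧ ∀ i, bind₁ tauC (tauC i) = h * X i) ∧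
    (∀ x : V3, x ≠ 0 →
      ((∀ i, eval x (tauC i) = 0) ↔ ProjRel (Pi.single 2 1) x)) ∧
    Contracts tauC (X 0) ∧
    (∀ P : P3, Irreducible P → (∃ d : ℕ, 1 ≤ d ∧ P.IsHomogeneous d) →
      Contracts tauC P → Associated P (X 0)) := by
  refine ⟨⟨X 0 ^ 3, pow_ne_zero _ (X_ne_zero _), ?_⟩, ?_, ?_, tau_contracted_line⟩
  · -- the involution identity
    intro i
    have h0 : tauC 0 = X 0 ^ 2 := rfl
    have h1 : tauC 1 = X 0 * X 1 := rfl
    have h2 : tauC 2 = X 1 ^ 2 - X 0 * X 2 := rfl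
    fin_cases i <;>
      simp only [show (⟨0, by omega⟩ : Fin 3) = 0 from rfl,
        show (⟨1, by omega⟩ : Fin 3) = 1 from rfl,
        show (⟨2, by omega⟩ : Fin 3) = 2 from rfl, h0, h1, h2, map_pow, map_mul, map_sub,
        bind₁_X_right] <;> ring
  · -- the indeterminacy point
    intro x hx
    constructor
    · intro h
      have h0 := h 0; have h2 := h 2
      simp only [tauC, Matrix.cons_val_zero, Matrix.cons_val_two, Matrix.tail_cons,
        Matrix.head_cons, map_pow, map_mul, map_sub, eval_X] at h0 h2
      have hx0 : x 0 = 0 := pow_eq_zero_iff (n := 2) (by norm_num) |>.1 h0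
      have hx1 : x 1 = 0 := by rw [hx0] at h2; simpa using h2
      have hx2 : x 2 ≠ 0 := by
        intro h'; apply hx; funext i; fin_cases i <;> simp [hx0, hx1, h']
      exact ⟨x 2, hx2, by funext i; fin_cases i <;> simp [Pi.single_apply, hx0, hx1]⟩
    · rintro ⟨c, hc, rfl⟩
      intro i; fin_cases i <;> simp [tauC, Pi.single_apply]
  · -- the contracted line
    refine ⟨Pi.single 2 1, ?_, ?_⟩
    · intro h; have := congrFun h 2; simp [Pi.single_apply] at this
    · intro x hx hP htau
      rw [eval_X] at hP
      have h1 : x 1 ≠ 0 := by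
        intro h'; apply htau; funext i
        fin_cases i <;> simp [evalT, tauC, hP, h']
      refine ⟨x 1 ^ 2, pow_ne_zero _ h1, ?_⟩
      funext i; fin_cases i <;> simp [evalT, tauC, hP, Pi.single_apply]
end

section
/- Any polynomial automorphism g of C² of degree 2 commuting with the elementary automorphism f = (αx₀ + β + x₁², a x₁ + b), where αa ≠ 0, preserves the fibration x₁ = constant (i.e., the second component of g depends only on x₁). -/
open MvPolynomial

/-- Polynomials in two variables over `ℂ` (the affine plane `ℂ²`). -/
abbrev P2 : Type := MvPolynomial (Fin 2) ℂ

/-- `(f, g)` is a pair of mutually inverse polynomial self-maps of `ℂ²`, i.e. `f` is a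
polynomial automorphism of `ℂ²` with polynomial inverse `g`. -/
def PolyAutPair (f g : Fin 2 → P2) : Prop :=
  (∀ i, bind₁ g (f i) = X i) ∧ (∀ i, bind₁ f (g i) = X i)

noncomputable def mm (i j : ℕ) : Fin 2 →₀ ℕ := Finsupp.single 0 i + Finsupp.single 1 j

lemma mm_apply0 (i j : ℕ) : mm i j 0 = i := by simp [mm]
lemma mm_apply1 (i j : ℕ) : mm i j 1 = j := by simp [mm]

lemma eq_mm (m : Fin 2 →₀ ℕ) : m = mm (m 0) (m 1) := by
  ext i; fin_cases i <;> simp [mm]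

lemma eq_mm_iff (s : Fin 2 →₀ ℕ) (i j : ℕ) : s = mm i j ↔ s 0 = i ∧ s 1 = j := by
  constructor
  · rintro rfl; simp [mm]
  · rintro ⟨h0, h1⟩; rw [eq_mm s, h0, h1]

lemma coeff_term (i j k l : ℕ) (r : ℂ) :
    coeff (mm i j) (C r * X 0 ^ k * X 1 ^ l : P2) = if k = i ∧ l = j then r else 0 := by
  rw [mul_assoc, X_pow_eq_monomial, X_pow_eq_monomial, monomial_mul, one_mul,
    C_mul_monomial, mul_one, coeff_monomial]
  congr 1
  rw [show Finsupp.single (0 : Fin 2) k + Finsupp.single 1 l = mm k l from rfl, eq_mm_iff]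
  simp [mm_apply0, mm_apply1]

lemma mm_degree (i j : ℕ) : ((mm i j).support.sum fun k => mm i j k) = i + j := by
  have h : ((mm i j).support.sum fun k => mm i j k) = ∑ k : Fin 2, mm i j k :=
    Finset.sum_subset (Finset.subset_univ _) (fun x _ hx => Finsupp.notMem_support_iff.mp hx)
  rw [h, Fin.sum_univ_two, mm_apply0, mm_apply1]

lemma decomp (p : P2) (h : p.totalDegree ≤ 2) :
    p = C (coeff (mm 0 0) p) * X 0 ^ 0 * X 1 ^ 0 + C (coeff (mm 1 0) p) * X 0 ^ 1 * X 1 ^ 0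
      + C (coeff (mm 0 1) p) * X 0 ^ 0 * X 1 ^ 1 + C (coeff (mm 2 0) p) * X 0 ^ 2 * X 1 ^ 0
      + C (coeff (mm 1 1) p) * X 0 ^ 1 * X 1 ^ 1 + C (coeff (mm 0 2) p) * X 0 ^ 0 * X 1 ^ 2 := by
  apply MvPolynomial.ext
  intro m
  rw [eq_mm m]
  simp only [coeff_add, coeff_term]
  by_cases hb : m 0 + m 1 ≤ 2
  · have h0 : m 0 ≤ 2 := by omega
    have h1 : m 1 ≤ 2 := by omega
    interval_cases h0' : (m 0) <;> interval_cases h1' : (m 1) <;> simp_all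
  · rw [coeff_eq_zero_of_totalDegree_lt (lt_of_le_of_lt h (by rw [mm_degree]; omega))]
    split_ifs <;> first | (exfalso; omega) | simp

lemma monomial_mul_two (s : Fin 2 →₀ ℕ) (r : ℂ) : (monomial s r : P2) * 2 = monomial s (r * 2) := by
  have h2 : (2:P2) = monomial 0 2 := by
    rw [← C_apply]; exact (map_ofNat C 2).symm
  rw [h2, monomial_mul, add_zero]

set_option maxHeartbeats 2000000 in
/-- Any quadratic polynomial automorphism `g` of `ℂ²` commuting with
the elementary automorphism `f = (αx₀ + β + x₁², ax₁ + b)`, where `αa ≠ 0`, preserves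
the fibration `x₁ = const`: the second component of `g` depends only on `x₁`. -/
theorem commuting_automorphism_preserves_fibration
    (α β a b : ℂ) (hαa : α * a ≠ 0)
    (f : Fin 2 → P2) (hfdef : f = ![C α * X 0 + C β + X 1 ^ 2, C a * X 1 + C b])
    (g ginv : Fin 2 → P2) (hg : PolyAutPair g ginv)
    (hdeg : ∀ i, (g i).totalDegree ≤ 2)
    (hcomm : ∀ i, bind₁ f (g i) = bind₁ g (f i)) :
    (g 1).vars ⊆ {1} := by
  have ha : a ≠ 0 := fun h => hαa (by rw [h, mul_zero])
  have hα : α ≠ 0 := fun h => hαa (by rw [h, zero_mul])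
  have hf0 : f 0 = C α * X 0 + C β + X 1 ^ 2 := by rw [hfdef]; rfl
  have hf1 : f 1 = C a * X 1 + C b := by rw [hfdef]; rfl
  have h1 : bind₁ f (g 1) = C a * g 1 + C b := by
    rw [hcomm 1, hf1]
    simp [map_add, map_mul, bind₁_X_right, bind₁_C_right]
  have h0 : bind₁ f (g 0) = C α * g 0 + C β + (g 1) ^ 2 := by
    rw [hcomm 0, hf0]
    simp [map_add, map_mul, map_pow, bind₁_X_right, bind₁_C_right]
  have hp := decomp (g 1) (hdeg 1)
  have hq := decomp (g 0) (hdeg 0)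
  rw [hp] at h1
  rw [hq, hp] at h0
  simp only [map_add, map_mul, map_pow, bind₁_X_right, bind₁_C_right, hf0, hf1] at h1 h0
  have e14 := congrArg (coeff (mm 0 4)) h1
  have e13 := congrArg (coeff (mm 0 3)) h1
  have e110 := congrArg (coeff (mm 1 0)) h1
  have e102 := congrArg (coeff (mm 0 2)) h1
  have e04 := congrArg (coeff (mm 0 4)) h0
  have e012 := congrArg (coeff (mm 1 2)) h0
  ring_nf at e14 e13 e110 e102 e04 e012
  simp only [monomial_mul_two,
    show (X 0 : P2) = monomial (Finsupp.single 0 1) 1 from rfl,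
    show (X 1 : P2) = monomial (Finsupp.single 1 1) 1 from rfl,
    X_pow_eq_monomial, C_apply, monomial_mul, monomial_pow, coeff_add, coeff_monomial,
    eq_mm_iff] at e14 e13 e110 e102 e04 e012
  simp only [Finsupp.add_apply, Finsupp.single_apply, Finsupp.coe_zero, Pi.zero_apply,
    Finsupp.coe_smul, Pi.smul_apply, smul_eq_mul] at e14 e13 e110 e102 e04 e012
  norm_num at e14 e13 e110 e102 e04 e012
  have hB : coeff (mm 1 1) (g 1) = 0 := e13.resolve_left ha
  have hu : coeff (mm 1 0) (g 1) = 0 := by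
    by_contra hu0
    have hα_eq : α = a := mul_right_cancel₀ hu0 (by
      linear_combination e110 - 2*α*β*e14 - α*b*hB)
    have key : a ^ 2 * (coeff (mm 0 2) (g 1) * coeff (mm 0 2) (g 1)) = 0 := by
      linear_combination (coeff (mm 0 2) (g 1)) * e102 + (1/2 : ℂ) * e012 - α * e04
        + (coeff (mm 0 1) (g 1)) * hB - 2*β*(coeff (mm 0 2) (g 1))*e14
        - b*(coeff (mm 0 2) (g 1))*hB - (coeff (mm 0 2) (g 1))^2 * hα_eq
    have hD : coeff (mm 0 2) (g 1) = 0 := by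
      rcases mul_eq_zero.mp key with h | h
      · exact absurd h (pow_ne_zero 2 ha)
      · exact mul_self_eq_zero.mp h
    exact hu0 (by linear_combination e102 - 2*β*e14 - b*hB - (a^2 - a)*hD)
  rw [e14, hB, hu] at hp
  intro i hi
  rw [hp, mem_vars] at hi
  obtain ⟨m, hm, him⟩ := hi
  rw [mem_support_iff] at hm
  rw [eq_mm m] at hm
  simp only [coeff_add, coeff_term] at hm
  rw [Finsupp.mem_support_iff] at him
  fin_cases i
  · exfalso
    have him' : m 0 ≠ 0 := him
    split_ifs at hm
    all_goals try (apply him'; omega)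
    all_goals (apply hm; norm_num)
  · simp
end
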